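/- Suppose for each j ∈ {1,...,q}, f_j(y_j|x) is a conditional density in ℒ*₁(𝕏) (a Gaussian-gated mixture of univariate Gaussians with input-independent expert means). Then the product f(y|x) = Π_{j=1}^{q} f_j(y_j|x), as a function of y = (y₁,...,y_q) ∈ ℝ^q and x ∈ 𝕏, belongs to ℒ*_q(𝕏), i.e., it can be written as Σ_{z=1}^{n} [π_z φ_p(x; μ_z, Σ_z) φ_q(y; a_z, C_z)] / [Σ_ζ π_ζ φ_p(x; μ_ζ, Σ_ζ)] for some n ∈ ℕ and valid parameters. -/

import Mathlib

open scoped Matrix BigOperators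

/-- The multivariate Gaussian density. -/
noncomputable def gaussPDF {ι : Type*} [Fintype ι] [DecidableEq ι] (μ : ι → ℝ)
    (S : Matrix ι ι ℝ) (x : ι → ℝ) : ℝ :=
  (Real.sqrt ((2 * Real.pi) ^ (Fintype.card ι) * S.det))⁻¹ *
    Real.exp (-(1 / 2) * ((x - μ) ⬝ᵥ (S⁻¹ *ᵥ (x - μ))))

/-- The univariate Gaussian density φ₁(y; a, σ²). -/
noncomputable def gaussPDF1 (a σsq y : ℝ) : ℝ :=
  (Real.sqrt (2 * Real.pi * σsq))⁻¹ * Real.exp (-(1 / 2) * ((y - a) ^ 2 / σsq))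

/-- Membership in ℒ*₁(𝕏): Gaussian-gated mixtures of univariate Gaussians with
input-independent expert means. -/
def MemLStarOne {p : ℕ} (𝕏 : Set (Fin p → ℝ)) (f : (Fin p → ℝ) → ℝ → ℝ) : Prop :=
  ∃ (n : ℕ) (π : Fin n → ℝ) (μ : Fin n → Fin p → ℝ)
    (S : Fin n → Matrix (Fin p) (Fin p) ℝ) (a : Fin n → ℝ) (σsq : Fin n → ℝ),
    0 < n ∧ (∀ z, 0 < π z) ∧ (∑ z, π z = 1) ∧ (∀ z, (S z).PosDef) ∧
    (∀ z, 0 < σsq z) ∧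
    ∀ x ∈ 𝕏, ∀ y : ℝ,
      f x y = ∑ z, (π z * gaussPDF (μ z) (S z) x * gaussPDF1 (a z) (σsq z) y) /
        (∑ ζ, π ζ * gaussPDF (μ ζ) (S ζ) x)

/-- Membership in ℒ*_q(𝕏). -/
def MemLStar {p q : ℕ} (𝕏 : Set (Fin p → ℝ)) (f : (Fin p → ℝ) → (Fin q → ℝ) → ℝ) : Prop :=
  ∃ (n : ℕ) (π : Fin n → ℝ) (μ : Fin n → Fin p → ℝ)
    (S : Fin n → Matrix (Fin p) (Fin p) ℝ) (a : Fin n → Fin q → ℝ)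
    (C : Fin n → Matrix (Fin q) (Fin q) ℝ),
    0 < n ∧ (∀ z, 0 < π z) ∧ (∑ z, π z = 1) ∧ (∀ z, (S z).PosDef) ∧
    (∀ z, (C z).PosDef) ∧
    ∀ x ∈ 𝕏, ∀ y : Fin q → ℝ,
      f x y = ∑ z, (π z * gaussPDF (μ z) (S z) x * gaussPDF (a z) (C z) y) /
        (∑ ζ, π ζ * gaussPDF (μ ζ) (S ζ) x)


lemma sqrt_prod' {α : Type*} (s : Finset α) (f : α → ℝ) (h : ∀ i ∈ s, 0 ≤ f i) :
    Real.sqrt (∏ i ∈ s, f i) = ∏ i ∈ s, Real.sqrt (f i) := by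
  induction s using Finset.cons_induction with
  | empty => simp
  | cons a s ha ih =>
      rw [Finset.prod_cons, Finset.prod_cons, Real.sqrt_mul (h a (Finset.mem_cons_self a s)),
        ih (fun i hi => h i (Finset.mem_cons_of_mem hi))]

lemma gaussPDF_pos {ι : Type*} [Fintype ι] [DecidableEq ι] (μ : ι → ℝ)
    {S : Matrix ι ι ℝ} (hS : S.PosDef) (x : ι → ℝ) : 0 < gaussPDF μ S x := by
  have h1 : 0 < (2 * Real.pi) ^ (Fintype.card ι) * S.det :=
    mul_pos (pow_pos (by positivity) _) hS.det_pos
  have := Real.sqrt_pos.mpr h1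
  unfold gaussPDF
  positivity

lemma prod_gaussPDF1 {q : ℕ} (a σ : Fin q → ℝ) (hσ : ∀ j, 0 < σ j) (y : Fin q → ℝ) :
    ∏ j, gaussPDF1 (a j) (σ j) (y j) = gaussPDF a (Matrix.diagonal σ) y := by
  unfold gaussPDF gaussPDF1
  rw [Finset.prod_mul_distrib, ← Real.exp_sum]
  congr 1
  · have : ((2:ℝ) * Real.pi) ^ q = ∏ _i : Fin q, (2 * Real.pi) := by
      simp [Finset.prod_const]
    rw [Matrix.det_diagonal, Fintype.card_fin, this, ← Finset.prod_mul_distrib,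
      sqrt_prod' _ _ (fun i _ => by have := hσ i; positivity), Finset.prod_inv_distrib]
  · have hinv : (Matrix.diagonal σ)⁻¹ = Matrix.diagonal (fun i => (σ i)⁻¹) := by
      apply Matrix.inv_eq_right_inv
      rw [Matrix.diagonal_mul_diagonal]
      convert Matrix.diagonal_one
      exact mul_inv_cancel₀ (hσ _).ne'
    rw [hinv]
    simp only [dotProduct, Matrix.mulVec_diagonal, Pi.sub_apply, Finset.mul_sum]
    congr 1
    refine Finset.sum_congr rfl (fun i _ => ?_)
    have := (hσ i).ne'
    field_simp

lemma sum_mulVec' {ι α : Type*} [Fintype ι] [Fintype α] (s : Finset α)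
    (A : α → Matrix ι ι ℝ) (x : ι → ℝ) :
    (∑ j ∈ s, A j) *ᵥ x = ∑ j ∈ s, (A j *ᵥ x) := by
  induction s using Finset.cons_induction with
  | empty => simp [Matrix.mulVec]
  | cons a s ha ih => rw [Finset.sum_cons, Finset.sum_cons, Matrix.add_mulVec, ih]

lemma dotProduct_sum' {ι α : Type*} [Fintype ι] (s : Finset α)
    (u : ι → ℝ) (v : α → ι → ℝ) : u ⬝ᵥ (∑ j ∈ s, v j) = ∑ j ∈ s, u ⬝ᵥ v j := by
  induction s using Finset.cons_induction with
  | empty => simp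
  | cons a s ha ih => rw [Finset.sum_cons, Finset.sum_cons, dotProduct_add, ih]

lemma dot_symm {ι : Type*} [Fintype ι] {M : Matrix ι ι ℝ} (hM : M.IsHermitian)
    (u v : ι → ℝ) : u ⬝ᵥ (M *ᵥ v) = v ⬝ᵥ (M *ᵥ u) := by
  have hMt : Mᵀ = M := by
    have := hM.eq
    rwa [Matrix.conjTranspose_eq_transpose_of_trivial] at this
  rw [Matrix.dotProduct_mulVec, ← Matrix.mulVec_transpose, hMt, dotProduct_comm]

lemma posSemidef_sum {ι α : Type*} [Fintype ι] [DecidableEq ι] (s : Finset α)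
    (A : α → Matrix ι ι ℝ) (hA : ∀ j ∈ s, (A j).PosSemidef) :
    (∑ j ∈ s, A j).PosSemidef := by
  induction s using Finset.cons_induction with
  | empty => simpa using Matrix.PosSemidef.zero
  | cons a s ha ih =>
      rw [Finset.sum_cons]
      exact (hA a (Finset.mem_cons_self a s)).add (ih (fun j hj => hA j (Finset.mem_cons_of_mem hj)))

lemma posDef_sum {p q : ℕ} (hq : 0 < q) (A : Fin q → Matrix (Fin p) (Fin p) ℝ)
    (hA : ∀ j, (A j).PosDef) : (∑ j, A j).PosDef := by
  have j0 : Fin q := ⟨0, hq⟩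
  rw [← Finset.add_sum_erase _ _ (Finset.mem_univ j0)]
  exact (hA j0).add_posSemidef
    (posSemidef_sum _ _ (fun j _ => (hA j).posSemidef))

lemma prod_gaussPDF_eq {p q : ℕ} (hq : 0 < q) (μ : Fin q → Fin p → ℝ)
    (S : Fin q → Matrix (Fin p) (Fin p) ℝ) (hS : ∀ j, (S j).PosDef) :
    ∃ (V : Matrix (Fin p) (Fin p) ℝ) (m : Fin p → ℝ) (c : ℝ), V.PosDef ∧ 0 < c ∧
      ∀ x, ∏ j, gaussPDF (μ j) (S j) x = c * gaussPDF m V x := by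
  set A : Fin q → Matrix (Fin p) (Fin p) ℝ := fun j => (S j)⁻¹ with hAdef
  have hA : ∀ j, (A j).PosDef := fun j => (hS j).inv
  set B : Matrix (Fin p) (Fin p) ℝ := ∑ j, A j with hBdef
  have hB : B.PosDef := posDef_sum hq A hA
  have hBdet : IsUnit B.det := isUnit_iff_ne_zero.mpr hB.det_pos.ne'
  set V := B⁻¹ with hVdef
  have hV : V.PosDef := hB.inv
  have hVinv : V⁻¹ = B := Matrix.nonsing_inv_nonsing_inv _ hBdet
  set b : Fin p → ℝ := ∑ j, (A j) *ᵥ (μ j) with hbdef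
  set m := V *ᵥ b with hmdef
  have hBm : B *ᵥ m = b := by
    rw [hmdef, hVdef, Matrix.mulVec_mulVec, Matrix.mul_nonsing_inv _ hBdet, Matrix.one_mulVec]
  set r : ℝ := (∑ j, μ j ⬝ᵥ (A j *ᵥ μ j)) - m ⬝ᵥ (B *ᵥ m) with hrdef
  have key : ∀ x : Fin p → ℝ,
      ∑ j, (x - μ j) ⬝ᵥ (A j *ᵥ (x - μ j)) = (x - m) ⬝ᵥ (B *ᵥ (x - m)) + r := by
    intro x
    have expand : ∀ (M : Matrix (Fin p) (Fin p) ℝ), M.IsHermitian → ∀ u v : Fin p → ℝ,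
        (u - v) ⬝ᵥ (M *ᵥ (u - v)) =
          u ⬝ᵥ (M *ᵥ u) - 2 * (u ⬝ᵥ (M *ᵥ v)) + v ⬝ᵥ (M *ᵥ v) := by
      intro M hM u v
      rw [Matrix.mulVec_sub, dotProduct_sub, sub_dotProduct,
        sub_dotProduct, dot_symm hM v u]
      ring
    have e1 : ∑ j, (x - μ j) ⬝ᵥ (A j *ᵥ (x - μ j)) =
        (∑ j, x ⬝ᵥ (A j *ᵥ x)) - 2 * (∑ j, x ⬝ᵥ (A j *ᵥ μ j)) + ∑ j, μ j ⬝ᵥ (A j *ᵥ μ j) := by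
      rw [Finset.mul_sum, ← Finset.sum_sub_distrib, ← Finset.sum_add_distrib]
      exact Finset.sum_congr rfl fun j _ => expand (A j) (hA j).isHermitian x (μ j)
    have e2 : ∑ j, x ⬝ᵥ (A j *ᵥ x) = x ⬝ᵥ (B *ᵥ x) := by
      rw [hBdef, sum_mulVec', dotProduct_sum']
    have e3 : ∑ j, x ⬝ᵥ (A j *ᵥ μ j) = x ⬝ᵥ (B *ᵥ m) := by
      rw [hBm, hbdef, dotProduct_sum']
    rw [e1, e2, e3, expand B hB.isHermitian x m, hrdef]
    ring
  set K : Matrix (Fin p) (Fin p) ℝ → ℝ :=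
    fun M => (Real.sqrt ((2 * Real.pi) ^ (Fintype.card (Fin p)) * M.det))⁻¹ with hKdef
  have hKpos : ∀ M : Matrix (Fin p) (Fin p) ℝ, M.PosDef → 0 < K M := by
    intro M hM
    have h0 : (0:ℝ) < (2 * Real.pi) ^ (Fintype.card (Fin p)) * M.det :=
      mul_pos (pow_pos (mul_pos two_pos Real.pi_pos) _) hM.det_pos
    exact inv_pos.mpr (Real.sqrt_pos.mpr h0)
  refine ⟨V, m, (∏ j, K (S j)) * Real.exp (-(1/2) * r) * (K V)⁻¹, hV, ?_, ?_⟩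
  · exact mul_pos (mul_pos (Finset.prod_pos fun j _ => hKpos _ (hS j)) (Real.exp_pos _))
      (inv_pos.mpr (hKpos V hV))
  · intro x
    have hKV := (hKpos V hV).ne'
    unfold gaussPDF
    rw [Finset.prod_mul_distrib, ← Real.exp_sum]
    have : ∑ j, -(1/2) * ((x - μ j) ⬝ᵥ ((S j)⁻¹ *ᵥ (x - μ j))) =
        -(1/2) * ((x - m) ⬝ᵥ (V⁻¹ *ᵥ (x - m))) + (-(1/2) * r) := by
      rw [← Finset.mul_sum, hVinv, key x]
      ring
    rw [this, Real.exp_add, hVinv]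
    have gen : ∀ P E1 E2 KV : ℝ, KV ≠ 0 →
        P * E2 * KV⁻¹ * (KV * E1) = P * (E1 * E2) := by
      intro P E1 E2 KV h
      field_simp
    exact (gen (∏ j, K (S j)) _ _ (K V) hKV).symm

theorem prod_memLStarOne_memLStar {p q : ℕ} (hq : 0 < q) (𝕏 : Set (Fin p → ℝ))
    (f : Fin q → ((Fin p → ℝ) → ℝ → ℝ))
    (hf : ∀ j, MemLStarOne 𝕏 (f j)) :
    MemLStar 𝕏 (fun x (y : Fin q → ℝ) => ∏ j, f j x (y j)) := by
  choose n π μ S a σ hn hπ hπsum hSpd hσ hfx using hf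
  set Z := ∀ j, Fin (n j) with hZ
  have hchoice := fun z : Z =>
    prod_gaussPDF_eq hq (fun j => μ j (z j)) (fun j => S j (z j)) (fun j => hSpd j (z j))
  choose V m c hV hc hprod using hchoice
  haveI : ∀ j, NeZero (n j) := fun j => ⟨(hn j).ne'⟩
  haveI : Nonempty Z := ⟨fun j => ⟨0, hn j⟩⟩
  set w : Z → ℝ := fun z => (∏ j, π j (z j)) * c z with hwdef
  have hw : ∀ z, 0 < w z := fun z =>
    mul_pos (Finset.prod_pos fun j _ => hπ j (z j)) (hc z)
  set W : ℝ := ∑ z : Z, w z with hWdef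
  have hW : 0 < W := Finset.sum_pos (fun z _ => hw z) Finset.univ_nonempty
  set N : ℕ := ∏ j, n j with hNdef
  have hN : 0 < N := Finset.prod_pos fun j _ => hn j
  set e : Fin N ≃ Z := finPiFinEquiv.symm with hedef
  refine ⟨N, fun k => w (e k) / W, fun k => m (e k), fun k => V (e k),
    fun k => fun j => a j (e k j), fun k => Matrix.diagonal (fun j => σ j (e k j)),
    hN, fun k => div_pos (hw (e k)) hW, ?_, fun k => hV (e k),
    fun k => Matrix.PosDef.diagonal (fun j => hσ j (e k j)), ?_⟩
  · rw [← Finset.sum_div, Equiv.sum_comp e w, div_self hW.ne']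
  · intro x hx y
    show (∏ j, f j x (y j)) = _
    -- abbreviations
    set Gx : Z → ℝ := fun z => gaussPDF (m z) (V z) x with hGx
    set Gy : Z → ℝ := fun z =>
      gaussPDF (fun j => a j (z j)) (Matrix.diagonal (fun j => σ j (z j))) y with hGy
    have lhs_eq : (∏ j, f j x (y j)) = (∑ z : Z, w z * Gx z * Gy z) / (∑ z : Z, w z * Gx z) := by
      have step1 : (∏ j, f j x (y j)) =
          (∏ j, ∑ z, π j z * gaussPDF (μ j z) (S j z) x * gaussPDF1 (a j z) (σ j z) (y j)) /
          (∏ j, ∑ ζ, π j ζ * gaussPDF (μ j ζ) (S j ζ) x) := by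
        rw [← Finset.prod_div_distrib]
        refine Finset.prod_congr rfl fun j _ => ?_
        rw [hfx j x hx (y j), Finset.sum_div]
      rw [step1]
      congr 1
      · rw [Finset.prod_univ_sum]
        rw [Fintype.piFinset_univ]
        refine Finset.sum_congr rfl fun z _ => ?_
        rw [Finset.prod_mul_distrib, Finset.prod_mul_distrib, hprod z x,
          prod_gaussPDF1 _ _ (fun j => hσ j (z j)) y]
        show (∏ j, π j (z j)) * (c z * Gx z) * Gy z = w z * Gx z * Gy z
        rw [hwdef]; ring
      · rw [Finset.prod_univ_sum]
        rw [Fintype.piFinset_univ]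
        refine Finset.sum_congr rfl fun z _ => ?_
        rw [Finset.prod_mul_distrib, hprod z x]
        show (∏ j, π j (z j)) * (c z * Gx z) = w z * Gx z
        rw [hwdef]; ring
    rw [lhs_eq]
    have den_eq : (∑ k : Fin N, w (e k) / W * gaussPDF (m (e k)) (V (e k)) x) =
        (∑ z : Z, w z * Gx z) / W := by
      rw [Finset.sum_div]
      rw [← Equiv.sum_comp e (fun z => w z * Gx z / W)]
      refine Finset.sum_congr rfl fun k _ => ?_
      rw [div_mul_eq_mul_div]
    rw [den_eq]
    beta_reduce
    rw [e.sum_comp (fun z => w z / W * Gx z * Gy z / ((∑ z' : Z, w z' * Gx z') / W))]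
    rw [← Finset.sum_div]
    have : ∑ z : Z, w z / W * Gx z * Gy z = (∑ z : Z, w z * Gx z * Gy z) / W := by
      rw [Finset.sum_div]
      refine Finset.sum_congr rfl fun z _ => ?_
      ring
    rw [this, div_div_div_cancel_right₀ hW.ne']
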